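/- Let A be a finite-dimensional local commutative unital ℂ-algebra with maximal ideal m and dim_ℂ A = k ≥ 1. Then A is isomorphic as a ℂ-algebra to ℂ[t]/(t^k) if and only if m^{k−1} ≠ 0. (Equivalently: a length-k subscheme ξ supported at the origin of ℂ^n, with ideal I ⊆ (x_1,…,x_n), is non-curvilinear if and only if I ⊇ (x_1,…,x_n)^{k−1}; in particular non-curvilinearity is a closed condition.) -/

import Mathlib

open Polynomial IsLocalRing

/-- A finite-dimensional local commutative unital `ℂ`-algebra `A` of dimension `k ≥ 1`, with
maximal ideal `m`, is isomorphic to `ℂ[t]/(t^k)` (i.e. is curvilinear) if and only if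
`m^{k-1} ≠ 0`. -/
theorem stmt16 (k : ℕ) (hk : 1 ≤ k) (A : Type) [CommRing A] [Algebra ℂ A]
    [IsLocalRing A] [FiniteDimensional ℂ A] (hA : Module.finrank ℂ A = k) :
    Nonempty (A ≃ₐ[ℂ] (Polynomial ℂ ⧸ Ideal.span {(Polynomial.X : Polynomial ℂ) ^ k})) ↔
      (IsLocalRing.maximalIdeal A) ^ (k - 1) ≠ ⊥ := by
  constructor
  · rintro ⟨e⟩
    rcases eq_or_lt_of_le hk with hk1 | hk2
    · -- k = 1
      rw [← hk1]
      simp only [Nat.sub_self, pow_zero, Ideal.one_eq_top]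
      exact top_ne_bot
    · -- k ≥ 2
      have hIne : Ideal.span {(X : ℂ[X]) ^ k} ≠ ⊤ := by
        intro h
        rw [Ideal.span_singleton_eq_top] at h
        exact (not_isUnit_of_natDegree_pos _
          (by simpa using by omega : 0 < ((X:ℂ[X])^k).natDegree)) h
      haveI : Nontrivial (ℂ[X] ⧸ Ideal.span {(X : ℂ[X]) ^ k}) := Ideal.Quotient.nontrivial_iff.mpr hIne
      set x : A := e.symm (Ideal.Quotient.mk _ X) with hx
      have hex : e x = Ideal.Quotient.mk _ X := e.apply_symm_apply _
      have hxm : x ∈ maximalIdeal A := by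
        rw [mem_maximalIdeal, mem_nonunits_iff]
        intro hu
        have hu' : IsUnit (Ideal.Quotient.mk (Ideal.span {(X : ℂ[X]) ^ k}) X) := hex ▸ hu.map e
        have hn : (Ideal.Quotient.mk (Ideal.span {(X : ℂ[X]) ^ k}) X) ^ k = 0 := by
          rw [← map_pow, Ideal.Quotient.eq_zero_iff_mem]
          exact Ideal.mem_span_singleton_self _
        have := hu'.pow k
        rw [hn] at this
        exact not_isUnit_zero this
      have hne : x ^ (k - 1) ≠ 0 := by
        intro h0
        have h1 : (Ideal.Quotient.mk (Ideal.span {(X : ℂ[X]) ^ k}) X) ^ (k-1) = 0 := by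
          rw [← hex, ← map_pow, h0, map_zero]
        rw [← map_pow, Ideal.Quotient.eq_zero_iff_mem, Ideal.mem_span_singleton,
          X_pow_dvd_iff] at h1
        have := h1 (k-1) (by omega)
        simp at this
      intro hbot
      exact hne (by simpa [hbot] using Ideal.pow_mem_pow hxm (k-1))
  · intro h
    -- Step 1: find a generator x of the maximal ideal, with m ^ k = ⊥
    have key : ∃ x : A, x ∈ IsLocalRing.maximalIdeal A ∧
        IsLocalRing.maximalIdeal A = Ideal.span {x} ∧ (IsLocalRing.maximalIdeal A) ^ k = ⊥ := by
      set m := maximalIdeal A with hm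
      have hnil : IsNilpotent m := by
        haveI : IsArtinianRing A := isArtinian_of_tower ℂ inferInstance
        rw [hm, ← jacobson_eq_maximalIdeal (⊥ : Ideal A) bot_ne_top]
        exact IsArtinianRing.isNilpotent_jacobson_bot
      have hmon : ∀ i j : ℕ, i ≤ j → m ^ j ≤ m ^ i := fun i j hij => Ideal.pow_le_pow_right hij
      have L1 : ∀ I : Ideal A, m * I = I → I = ⊥ := by
        intro I hI
        obtain ⟨n, hn⟩ := hnil
        have key : ∀ j : ℕ, m ^ j * I = I := by
          intro j
          induction j with
          | zero => simp [Ideal.one_eq_top]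
          | succ j ih => rw [pow_succ, mul_assoc, hI, ih]
        have := key n
        rw [hn, zero_mul] at this
        exact this.symm
      have Lstrict : ∀ i : ℕ, m ^ (i+1) ≠ ⊥ → m ^ (i+1) < m ^ i := by
        intro i hne
        refine lt_of_le_of_ne (hmon i (i+1) (by omega)) ?_
        intro heq
        have hb := L1 (m ^ i) (by rw [← pow_succ']; exact heq)
        exact hne (le_bot_iff.mp (hb ▸ hmon i (i+1) (by omega)))
      have hnb : ∀ i, i ≤ k - 1 → m ^ i ≠ ⊥ := by
        intro i hi hbot
        exact h (le_bot_iff.mp (hbot ▸ hmon i (k-1) hi))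
      set S : ℕ → Submodule ℂ A := fun i => Submodule.restrictScalars ℂ (m ^ i) with hS
      set d : ℕ → ℕ := fun i => Module.finrank ℂ (S i) with hd
      have hSlt : ∀ i : ℕ, m ^ (i+1) < m ^ i → S (i+1) < S i := by
        intro i hlt
        exact lt_of_le_of_ne hlt.le
          (fun he => hlt.ne (Submodule.restrictScalars_injective ℂ _ _ he))
      have hd0 : d 0 = k := by
        have h1 : S 0 = ⊤ := by
          rw [hS]
          simp
        show Module.finrank ℂ (S 0) = k
        rw [h1, finrank_top]
        exact hA
      have hdlt : ∀ i : ℕ, i + 1 ≤ k - 1 → d (i+1) < d i := fun i hi =>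
        Submodule.finrank_lt_finrank_of_lt (hSlt i (Lstrict i (hnb (i+1) hi)))
      have hub : ∀ i : ℕ, i ≤ k - 1 → d i + i ≤ k := by
        intro i
        induction i with
        | zero => simp [hd0]
        | succ i ih =>
          intro hi
          have h1 := hdlt i hi
          have h2 := ih (by omega)
          omega
      have hdpos : 0 < d (k-1) := by
        have : Nontrivial (S (k-1)) := Submodule.nontrivial_iff_ne_bot.mpr
          (fun hb => hnb (k-1) le_rfl (Submodule.restrictScalars_injective ℂ _ _ (by simpa [hS] using hb)))
        exact Module.finrank_pos
      have hlb : ∀ j : ℕ, j ≤ k - 1 → j + 1 ≤ d (k-1-j) := by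
        intro j
        induction j with
        | zero => exact fun _ => Nat.succ_le_of_lt hdpos
        | succ j ih =>
          intro hj
          have h1 : k - 1 - (j+1) + 1 = k - 1 - j := by omega
          have h2 := ih (by omega)
          have h3 : d (k-1-j) < d (k-1-(j+1)) := by
            have := hdlt (k-1-(j+1)) (by omega)
            rwa [h1] at this
          omega
      have hmk : m ^ k = ⊥ := by
        by_contra hne
        have hlt : S k < S (k-1) := by
          have h0 := hSlt (k-1) (Lstrict (k-1) (by rwa [Nat.sub_add_cancel hk]))
          rwa [Nat.sub_add_cancel hk] at h0
        have h1 : d k < d (k-1) := Submodule.finrank_lt_finrank_of_lt hlt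
        have h2 := hub (k-1) le_rfl
        have h3 : d k = 0 := by omega
        have : S k = ⊥ := Submodule.finrank_eq_zero.mp h3
        exact hne (Submodule.restrictScalars_injective ℂ _ _ (by simpa [hS] using this))
      -- extract a generator
      rcases eq_or_lt_of_le hk with hk1 | hk2
      · -- k = 1 : m = ⊥
        refine ⟨0, Ideal.zero_mem m, ?_, hmk⟩
        rw [Ideal.span_singleton_eq_bot.mpr rfl]
        have := hmk
        rw [← hk1, pow_one] at this
        exact this
      · -- k ≥ 2
        have hd1 : d 1 = k - 1 := by
          have hu := hub 1 (by omega)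
          have hl := hlb (k-2) (by omega)
          have he : k - 1 - (k-2) = 1 := by omega
          rw [he] at hl
          omega
        have hd2 : d 2 = k - 2 := by
          rcases eq_or_lt_of_le (Nat.succ_le_of_lt hk2) with hk2' | hk3
          · -- k = 2
            have hS2 : S 2 = ⊥ := by
              rw [hS]
              simp only
              rw [show (2:ℕ) = k by omega, hmk]
              rfl
            have : d 2 = 0 := by
              show Module.finrank ℂ (S 2) = 0
              rw [hS2]
              exact finrank_bot ℂ A
            omega
          · have hu := hub 2 (by omega)
            have hl := hlb (k-3) (by omega)
            have he : k - 1 - (k-3) = 2 := by omega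
            rw [he] at hl
            omega
        have hS2S1 : S 2 < S 1 := by
          refine lt_of_le_of_ne ?_ ?_
          · intro a ha
            exact hmon 1 2 (by omega) ha
          · intro he
            have : d 2 = d 1 := by
              show Module.finrank ℂ (S 2) = Module.finrank ℂ (S 1)
              rw [he]
            omega
        obtain ⟨x, hx1, hx2⟩ := SetLike.exists_of_lt hS2S1
        have hxm : x ∈ m := by
          have : x ∈ m ^ 1 := hx1
          rwa [pow_one] at this
        have hsup : Ideal.span {x} ⊔ m ^ 2 = m := by
          have hT1 : Submodule.restrictScalars ℂ (Ideal.span {x} ⊔ m ^ 2) ≤ S 1 := by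
            intro a ha
            have ha' : a ∈ Ideal.span {x} ⊔ m ^ 2 := ha
            have hle : Ideal.span {x} ⊔ m ^ 2 ≤ m ^ 1 := by
              rw [pow_one]
              exact sup_le ((Ideal.span_singleton_le_iff_mem m).mpr hxm)
                (Ideal.pow_le_self two_ne_zero)
            exact hle ha'
          have hlow : S 2 ⊔ Submodule.span ℂ {x} ≤
              Submodule.restrictScalars ℂ (Ideal.span {x} ⊔ m ^ 2) := by
            refine sup_le ?_ ?_
            · intro a ha
              exact Ideal.mem_sup_right ha
            · rw [Submodule.span_le, Set.singleton_subset_iff]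
              exact Ideal.mem_sup_left (Ideal.mem_span_singleton_self x)
          have hstep : S 2 < S 2 ⊔ Submodule.span ℂ {x} := by
            refine lt_of_le_of_ne le_sup_left ?_
            intro he
            apply hx2
            have : x ∈ S 2 ⊔ Submodule.span ℂ {x} :=
              Submodule.mem_sup_right (Submodule.mem_span_singleton_self x)
            rwa [← he] at this
          have h1 : d 2 < Module.finrank ℂ (S 2 ⊔ Submodule.span ℂ {x} : Submodule ℂ A) :=
            Submodule.finrank_lt_finrank_of_lt hstep
          have h2 : Module.finrank ℂ (S 2 ⊔ Submodule.span ℂ {x} : Submodule ℂ A) ≤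
              Module.finrank ℂ (Submodule.restrictScalars ℂ (Ideal.span {x} ⊔ m ^ 2)) :=
            Submodule.finrank_mono hlow
          have heq : Submodule.restrictScalars ℂ (Ideal.span {x} ⊔ m ^ 2) = S 1 := by
            refine Submodule.eq_of_le_of_finrank_le hT1 ?_
            show d 1 ≤ _
            omega
          refine Submodule.restrictScalars_injective ℂ _ _ (heq.trans ?_)
          show Submodule.restrictScalars ℂ (m ^ 1) = _
          rw [pow_one]
        -- Nakayama-type argument
        have hle : ∀ j : ℕ, m ≤ Ideal.span {x} ⊔ m ^ (j + 1) := by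
          intro j
          induction j with
          | zero =>
            rw [pow_one]
            exact le_sup_right
          | succ j ih =>
            have step : m * m ≤ Ideal.span {x} ⊔ m ^ (j + 2) := by
              calc m * m ≤ m * (Ideal.span {x} ⊔ m ^ (j+1)) := Ideal.mul_mono_right ih
                _ = m * Ideal.span {x} ⊔ m * m ^ (j+1) := Ideal.mul_sup _ _ _
                _ ≤ Ideal.span {x} ⊔ m ^ (j + 2) := by
                    refine sup_le_sup Ideal.mul_le_right ?_
                    rw [← pow_succ']
            calc m = Ideal.span {x} ⊔ m ^ 2 := hsup.symm
              _ ≤ Ideal.span {x} ⊔ (Ideal.span {x} ⊔ m ^ (j+2)) := by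
                  refine sup_le_sup le_rfl ?_
                  rw [pow_two]
                  exact step
              _ = Ideal.span {x} ⊔ m ^ (j + 2) := by rw [← sup_assoc, sup_idem]
        have hfin : m = Ideal.span {x} := by
          refine le_antisymm ?_ ((Ideal.span_singleton_le_iff_mem m).mpr hxm)
          have := hle k
          have hk1 : m ^ (k + 1) = ⊥ := by
            rw [pow_succ, hmk, Ideal.bot_mul]
          rw [hk1, sup_bot_eq] at this
          exact this
        exact ⟨x, hxm, hfin, hmk⟩

    obtain ⟨x, hxm, hspan, hmk⟩ := key
    set m := maximalIdeal A with hm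
    have hpow : ∀ j : ℕ, m ^ j = Ideal.span {x ^ j} := by
      intro j
      rw [hspan, Ideal.span_singleton_pow]
    have hxk : x ^ k = 0 := by
      have : x ^ k ∈ m ^ k := by
        rw [hpow k]
        exact Ideal.mem_span_singleton_self _
      rwa [hmk, Ideal.mem_bot] at this
    -- Step 2: residue field is ℂ
    have hres : ∀ c : A, ∃ γ : ℂ, c - algebraMap ℂ A γ ∈ m := by
      haveI : (maximalIdeal A).IsMaximal := maximalIdeal.isMaximal A
      letI : Field (A ⧸ maximalIdeal A) := Ideal.Quotient.field _
      haveI : Module.Finite ℂ (A ⧸ maximalIdeal A) :=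
        Module.Finite.of_surjective (Ideal.Quotient.mkₐ ℂ (maximalIdeal A)).toLinearMap
          Ideal.Quotient.mk_surjective
      haveI : Algebra.IsIntegral ℂ (A ⧸ maximalIdeal A) := Algebra.IsIntegral.of_finite ℂ _
      have hsurj : Function.Surjective (algebraMap ℂ (A ⧸ maximalIdeal A)) :=
        IsAlgClosed.algebraMap_bijective_of_isIntegral.2
      intro c
      obtain ⟨γ, hγ⟩ := hsurj (Ideal.Quotient.mk (maximalIdeal A) c)
      refine ⟨γ, ?_⟩
      rw [hm, ← Ideal.Quotient.eq_zero_iff_mem, map_sub, ← hγ]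
      rw [← Ideal.Quotient.algebraMap_eq]
      rw [← IsScalarTower.algebraMap_apply ℂ A (A ⧸ maximalIdeal A)]
      exact sub_self _
    -- Step 3: aeval x is surjective
    have hsur : Function.Surjective (aeval x : ℂ[X] →ₐ[ℂ] A) := by
      have main : ∀ j : ℕ, ∀ a : A, ∃ p : ℂ[X], a - aeval x p ∈ m ^ j := by
        intro j
        induction j with
        | zero =>
          intro a
          exact ⟨0, by simp [Ideal.one_eq_top]⟩
        | succ j ih =>
          intro a
          obtain ⟨p, hp⟩ := ih a
          rw [hpow j, Ideal.mem_span_singleton'] at hp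
          obtain ⟨c, hc⟩ := hp
          obtain ⟨γ, hγ⟩ := hres c
          rw [hspan, Ideal.mem_span_singleton'] at hγ
          obtain ⟨e, he⟩ := hγ
          refine ⟨p + C γ * X ^ j, ?_⟩
          have expand : a - aeval x (p + C γ * X ^ j) = e * x ^ (j+1) := by
            have h1 : aeval x (p + C γ * X ^ j) = aeval x p + algebraMap ℂ A γ * x ^ j := by
              simp [map_add, map_mul, map_pow, aeval_C, aeval_X]
            have h2 : c = e * x + algebraMap ℂ A γ := by
              have := he
              linear_combination (norm := ring_nf) -this
            rw [h1]
            have h3 : a - aeval x p = c * x ^ j := hc.symm ▸ rfl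
            calc a - (aeval x p + algebraMap ℂ A γ * x ^ j)
                = (a - aeval x p) - algebraMap ℂ A γ * x ^ j := by ring
              _ = c * x ^ j - algebraMap ℂ A γ * x ^ j := by rw [← hc]
              _ = e * x ^ (j+1) := by rw [h2]; ring
          rw [expand, hpow (j+1)]
          exact Ideal.mem_span_singleton'.mpr ⟨e, rfl⟩
      intro a
      obtain ⟨p, hp⟩ := main k a
      rw [hmk, Ideal.mem_bot, sub_eq_zero] at hp
      exact ⟨p, hp.symm⟩
    -- Step 4: build the equivalence
    have hker : ∀ p ∈ Ideal.span {(X : ℂ[X]) ^ k}, aeval x p = 0 := by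
      intro p hp
      rw [Ideal.mem_span_singleton] at hp
      obtain ⟨q, rfl⟩ := hp
      rw [map_mul, map_pow, aeval_X, hxk]
      ring
    set ψ := Ideal.Quotient.liftₐ (Ideal.span {(X : ℂ[X]) ^ k}) (aeval x) hker with hψ
    have hψsur : Function.Surjective ψ := by
      intro a
      obtain ⟨p, hp⟩ := hsur a
      exact ⟨Ideal.Quotient.mk _ p, hp⟩
    have hfr : Module.finrank ℂ (ℂ[X] ⧸ Ideal.span {(X : ℂ[X]) ^ k}) = k := by
      have hne : (X : ℂ[X]) ^ k ≠ 0 := pow_ne_zero _ X_ne_zero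
      have := (AdjoinRoot.powerBasis hne).finrank
      simp [AdjoinRoot.powerBasis] at this
      exact this
    haveI : FiniteDimensional ℂ (ℂ[X] ⧸ Ideal.span {(X : ℂ[X]) ^ k}) := by
      have hne : (X : ℂ[X]) ^ k ≠ 0 := pow_ne_zero _ X_ne_zero
      exact Module.Finite.of_basis (AdjoinRoot.powerBasis hne).basis
    have hψinj : Function.Injective ψ := by
      have h' : Function.Surjective ψ.toLinearMap := hψsur
      exact (LinearMap.injective_iff_surjective_of_finrank_eq_finrank
        (by rw [hfr, hA])).mpr h'
    exact ⟨(AlgEquiv.ofBijective ψ ⟨hψinj, hψsur⟩).symm⟩
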